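/- Let a1 ≠ a2 be vectors in ℝ^l with all coordinates strictly positive and coordinates summing to 1, and let ω1, ω2 ∈ ℝ^l with nonnegative coordinates. Assume non-triviality: there exist x1, x2 ∈ ℝ^l with nonnegative coordinates such that x1 + x2 = ω1 + ω2, a1·x1 > a1·ω1, and a2·x2 > a2·ω2. Let x*_1 maximize a1·x over {x ∈ ℝ^l : x ≥ 0, a2·x ≤ a2·ω1} and let x*_2 maximize a2·x over {x ∈ ℝ^l : x ≥ 0, a1·x ≤ a1·ω2}. Then it is not the case that both x*_1 ≤ ω1 + ω2 and x*_2 ≤ ω1 + ω2 hold componentwise; i.e., at least one of x*_1, x*_2 is not dominated by the total endowment ω1 + ω2. -/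
import Mathlib


noncomputable section

/-- Dot product of two vectors in `ℝ^l`. -/
def dotp {l : ℕ} (a x : Fin l → ℝ) : ℝ := ∑ i, a i * x i

lemma dotp_update {l : ℕ} (a x : Fin l → ℝ) (j : Fin l) (c : ℝ) :
    dotp a (Function.update x j c) = dotp a x + a j * (c - x j) := by
  have h : ∀ i, a i * Function.update x j c i =
      a i * x i + (if i = j then a j * (c - x j) else 0) := by
    intro i
    by_cases hij : i = j
    · subst hij; simp [Function.update_self]; ring
    · simp [Function.update_of_ne hij, hij]
  simp only [dotp, h, Finset.sum_add_distrib, Finset.sum_ite_eq',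
    Finset.mem_univ, if_true]

lemma dotp_add {l : ℕ} (a x y : Fin l → ℝ) :
    dotp a (x + y) = dotp a x + dotp a y := by
  simp [dotp, mul_add, Finset.sum_add_distrib]

/-- Budget constraint binds at an optimum for a strictly monotone linear objective. -/
lemma budget_binds {l : ℕ} (hl : 1 ≤ l) (a b x : Fin l → ℝ) (B : ℝ)
    (ha : ∀ i, 0 < a i) (hb : ∀ i, 0 < b i) (hx : 0 ≤ x) (hbud : dotp a x ≤ B)
    (hmax : ∀ y : Fin l → ℝ, 0 ≤ y → dotp a y ≤ B → dotp b y ≤ dotp b x) :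
    dotp a x = B := by
  by_contra hne
  have hlt : dotp a x < B := lt_of_le_of_ne hbud hne
  set i₀ : Fin l := ⟨0, hl⟩
  set c : ℝ := x i₀ + (B - dotp a x) / a i₀ with hc
  set y := Function.update x i₀ c with hy
  have hcpos : x i₀ < c := by
    have : 0 < (B - dotp a x) / a i₀ := div_pos (by linarith) (ha i₀)
    simp only [hc]; linarith
  have hynn : 0 ≤ y := by
    intro i
    by_cases hi : i = i₀
    · rw [hy, hi, Function.update_self]
      exact le_trans (hx i₀) (le_of_lt hcpos)
    · simp only [hy, Function.update_of_ne hi]; exact hx i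
  have hay : dotp a y = B := by
    rw [hy, dotp_update]
    have : a i₀ * (c - x i₀) = B - dotp a x := by
      simp only [hc, add_sub_cancel_left]
      exact mul_div_cancel₀ _ (ne_of_gt (ha i₀))
    rw [this]; ring
  have hby : dotp b x < dotp b y := by
    rw [hy, dotp_update]
    have : 0 < b i₀ * (c - x i₀) := mul_pos (hb i₀) (by linarith)
    linarith
  have := hmax y hynn (le_of_eq hay)
  linarith

/-- At an optimum, the demand is supported on coordinates maximizing `b i / a i`. -/
lemma support_max {l : ℕ} (a b x : Fin l → ℝ) (B : ℝ) (i₀ : Fin l)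
    (ha : ∀ i, 0 < a i) (hx : 0 ≤ x) (hbud : dotp a x ≤ B)
    (hmax : ∀ y : Fin l → ℝ, 0 ≤ y → dotp a y ≤ B → dotp b y ≤ dotp b x)
    (hi₀ : ∀ i, b i * a i₀ ≤ b i₀ * a i)
    (i : Fin l) (hxi : x i ≠ 0) : b i * a i₀ = b i₀ * a i := by
  rcases eq_or_lt_of_le (hi₀ i) with h | h
  · exact h
  exfalso
  have hxipos : 0 < x i := lt_of_le_of_ne (hx i) (Ne.symm hxi)
  have hii₀ : i ≠ i₀ := by
    intro he; subst he
    exact absurd h (lt_irrefl _)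
  set c : ℝ := x i₀ + a i * x i / a i₀ with hc
  set y := Function.update (Function.update x i 0) i₀ c with hy
  have hynn : 0 ≤ y := by
    intro j
    by_cases hj : j = i₀
    · rw [hy, hj, Function.update_self]
      have hp : 0 < a i * x i / a i₀ := div_pos (mul_pos (ha i) hxipos) (ha i₀)
      have := hx i₀; simp only [hc]; linarith
    · simp only [hy, Function.update_of_ne hj]
      by_cases hj' : j = i
      · subst hj'; simp
      · simp only [Function.update_of_ne hj']; exact hx j
  have hupd : (Function.update x i 0) i₀ = x i₀ := Function.update_of_ne (Ne.symm hii₀) _ _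
  have hay : dotp a y = dotp a x := by
    rw [hy, dotp_update, dotp_update, hupd]
    have : a i₀ * (c - x i₀) = a i * x i := by
      simp only [hc, add_sub_cancel_left]
      exact mul_div_cancel₀ _ (ne_of_gt (ha i₀))
    rw [this]; ring
  have hby : dotp b x < dotp b y := by
    rw [hy, dotp_update, dotp_update, hupd]
    have hkey : b i * x i < b i₀ * (c - x i₀) := by
      have : b i₀ * (c - x i₀) = b i₀ * a i * x i / a i₀ := by
        simp only [hc]; ring
      rw [this]
      rw [lt_div_iff₀ (ha i₀)]
      calc b i * x i * a i₀ = (b i * a i₀) * x i := by ring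
        _ < (b i₀ * a i) * x i := by
            exact mul_lt_mul_of_pos_right h hxipos
        _ = b i₀ * a i * x i := by ring
    nlinarith
  have := hmax y hynn (hay ▸ hbud)
  linarith

/-- In a non-trivial two-atom linear economy, if `x*₁` is atom 1's
demand at prices `p = a2` and `x*₂` is atom 2's demand at prices `p = a1`, then at least
one of `x*₁, x*₂` is not dominated componentwise by the total endowment `ω1 + ω2`. -/
theorem demand_infeasible_at_cross_prices
    {l : ℕ} (hl : 1 ≤ l) (a1 a2 ω1 ω2 : Fin l → ℝ)
    (ha1pos : ∀ i, 0 < a1 i) (ha2pos : ∀ i, 0 < a2 i)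
    (ha1sum : ∑ i, a1 i = 1) (ha2sum : ∑ i, a2 i = 1) (hne : a1 ≠ a2)
    (hω1 : 0 ≤ ω1) (hω2 : 0 ≤ ω2)
    (hnontriv : ∃ x1 x2 : Fin l → ℝ, 0 ≤ x1 ∧ 0 ≤ x2 ∧ x1 + x2 = ω1 + ω2 ∧
      dotp a1 ω1 < dotp a1 x1 ∧ dotp a2 ω2 < dotp a2 x2)
    (xs1 xs2 : Fin l → ℝ)
    (hxs1_nonneg : 0 ≤ xs1) (hxs1_budget : dotp a2 xs1 ≤ dotp a2 ω1)
    (hxs1_max : ∀ x : Fin l → ℝ, 0 ≤ x → dotp a2 x ≤ dotp a2 ω1 →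
      dotp a1 x ≤ dotp a1 xs1)
    (hxs2_nonneg : 0 ≤ xs2) (hxs2_budget : dotp a1 xs2 ≤ dotp a1 ω2)
    (hxs2_max : ∀ x : Fin l → ℝ, 0 ≤ x → dotp a1 x ≤ dotp a1 ω2 →
      dotp a2 x ≤ dotp a2 xs2) :
    ¬ (xs1 ≤ ω1 + ω2 ∧ xs2 ≤ ω1 + ω2) := by
  rintro ⟨h1, h2⟩
  obtain ⟨x1, x2, hx1n, hx2n, hsum, hgt1, hgt2⟩ := hnontriv
  -- basic sum identities
  have hsplit : ∀ a : Fin l → ℝ, dotp a x1 + dotp a x2 = dotp a ω1 + dotp a ω2 := by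
    intro a; rw [← dotp_add, ← dotp_add, hsum]
  -- x2 is feasible for atom 2's problem
  have hx2feas : dotp a1 x2 ≤ dotp a1 ω2 := by
    have := hsplit a1; linarith
  have hxs2gt : dotp a2 ω2 < dotp a2 xs2 :=
    lt_of_lt_of_le hgt2 (hxs2_max x2 hx2n hx2feas)
  -- atom 1's budget binds
  have binding1 : dotp a2 xs1 = dotp a2 ω1 :=
    budget_binds hl a2 a1 xs1 _ ha2pos ha1pos hxs1_nonneg hxs1_budget hxs1_max
  -- argmax indices
  obtain ⟨i₀, -, hi₀max⟩ := Finset.exists_max_image (Finset.univ : Finset (Fin l))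
    (fun i => a1 i / a2 i) ⟨⟨0, hl⟩, Finset.mem_univ _⟩
  obtain ⟨j₀, -, hj₀max⟩ := Finset.exists_max_image (Finset.univ : Finset (Fin l))
    (fun i => a2 i / a1 i) ⟨⟨0, hl⟩, Finset.mem_univ _⟩
  have hi₀ : ∀ i, a1 i * a2 i₀ ≤ a1 i₀ * a2 i := by
    intro i
    have := hi₀max i (Finset.mem_univ i)
    rw [div_le_div_iff₀ (ha2pos i) (ha2pos i₀)] at this
    linarith
  have hj₀ : ∀ i, a2 i * a1 j₀ ≤ a2 j₀ * a1 i := by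
    intro i
    have := hj₀max i (Finset.mem_univ i)
    rw [div_le_div_iff₀ (ha1pos i) (ha1pos j₀)] at this
    linarith
  -- since a1 ≠ a2 with equal sums, there exist coordinates in each direction
  have hex1 : ∃ j, a2 j < a1 j := by
    by_contra h; push_neg at h
    apply hne; funext i
    exact (Finset.sum_eq_sum_iff_of_le (fun i _ => h i)).mp
      (ha1sum.trans ha2sum.symm) i (Finset.mem_univ i)
  have hex2 : ∃ j, a1 j < a2 j := by
    by_contra h; push_neg at h
    apply hne; funext i
    exact ((Finset.sum_eq_sum_iff_of_le (fun i _ => h i)).mp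
      (ha2sum.trans ha1sum.symm) i (Finset.mem_univ i)).symm
  obtain ⟨j1, hj1⟩ := hex1
  obtain ⟨j2, hj2⟩ := hex2
  have hri₀ : a2 i₀ < a1 i₀ := by
    have h := hi₀ j1
    nlinarith [ha2pos j1, ha2pos i₀]
  have hrj₀ : a1 j₀ < a2 j₀ := by
    have h := hj₀ j2
    nlinarith [ha1pos j2, ha1pos j₀]
  -- support sets
  set S1 : Finset (Fin l) := Finset.univ.filter (fun i => a1 i * a2 i₀ = a1 i₀ * a2 i) with hS1
  set S2 : Finset (Fin l) := Finset.univ.filter (fun i => a2 i * a1 j₀ = a2 j₀ * a1 i) with hS2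
  have supp1 : ∀ i, xs1 i ≠ 0 → a1 i * a2 i₀ = a1 i₀ * a2 i :=
    support_max a2 a1 xs1 _ i₀ ha2pos hxs1_nonneg hxs1_budget hxs1_max hi₀
  have supp2 : ∀ i, xs2 i ≠ 0 → a2 i * a1 j₀ = a2 j₀ * a1 i :=
    support_max a1 a2 xs2 _ j₀ ha1pos hxs2_nonneg hxs2_budget hxs2_max hj₀
  -- S1 and S2 are disjoint
  have hdisj : Disjoint S1 S2 := by
    rw [Finset.disjoint_left]
    intro i hiS1 hiS2
    rw [hS1, Finset.mem_filter] at hiS1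
    rw [hS2, Finset.mem_filter] at hiS2
    have e1 := hiS1.2
    have e2 := hiS2.2
    have c1 : a1 i * (a2 i₀ * a1 j₀) = a1 i * (a1 i₀ * a2 j₀) := by
      calc a1 i * (a2 i₀ * a1 j₀) = (a1 i * a2 i₀) * a1 j₀ := by ring
        _ = (a1 i₀ * a2 i) * a1 j₀ := by rw [e1]
        _ = a1 i₀ * (a2 i * a1 j₀) := by ring
        _ = a1 i₀ * (a2 j₀ * a1 i) := by rw [e2]
        _ = a1 i * (a1 i₀ * a2 j₀) := by ring
    have key := mul_left_cancel₀ (ne_of_gt (ha1pos i)) c1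
    nlinarith [mul_lt_mul_of_pos_right hri₀ (ha1pos j₀),
      mul_lt_mul_of_pos_left hrj₀ (ha1pos i₀)]
  -- dotp restricted to supports
  have e1 : dotp a2 xs1 = ∑ i ∈ S1, a2 i * xs1 i := by
    refine (Finset.sum_subset (Finset.filter_subset _ _) ?_).symm
    intro i _ hi
    have : xs1 i = 0 := by
      by_contra hx
      exact hi (Finset.mem_filter.mpr ⟨Finset.mem_univ i, supp1 i hx⟩)
    rw [this, mul_zero]
  have e2 : dotp a2 xs2 = ∑ i ∈ S2, a2 i * xs2 i := by
    refine (Finset.sum_subset (Finset.filter_subset _ _) ?_).symm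
    intro i _ hi
    have : xs2 i = 0 := by
      by_contra hx
      exact hi (Finset.mem_filter.mpr ⟨Finset.mem_univ i, supp2 i hx⟩)
    rw [this, mul_zero]
  -- bounds from domination by total endowment
  have hA : dotp a2 ω1 ≤ ∑ i ∈ S1, a2 i * (ω1 i + ω2 i) := by
    rw [← binding1, e1]
    refine Finset.sum_le_sum fun i _ => ?_
    have := h1 i
    simp only [Pi.add_apply] at this
    exact mul_le_mul_of_nonneg_left this (le_of_lt (ha2pos i))
  have hC : dotp a2 ω2 < ∑ i ∈ S2, a2 i * (ω1 i + ω2 i) := by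
    refine lt_of_lt_of_le (e2 ▸ hxs2gt) ?_
    refine Finset.sum_le_sum fun i _ => ?_
    have := h2 i
    simp only [Pi.add_apply] at this
    exact mul_le_mul_of_nonneg_left this (le_of_lt (ha2pos i))
  have htot : (∑ i ∈ S1, a2 i * (ω1 i + ω2 i)) + (∑ i ∈ S2, a2 i * (ω1 i + ω2 i))
      ≤ ∑ i, a2 i * (ω1 i + ω2 i) := by
    rw [← Finset.sum_union hdisj]
    refine Finset.sum_le_sum_of_subset_of_nonneg (Finset.subset_univ _) fun i _ _ => ?_
    exact mul_nonneg (ha2pos i).le (add_nonneg (hω1 i) (hω2 i))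
  have hfull : ∑ i, a2 i * (ω1 i + ω2 i) = dotp a2 ω1 + dotp a2 ω2 := by
    simp [dotp, mul_add, Finset.sum_add_distrib]
  linarith
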